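/- Equivalence of the nested-call model R3 and the call-stack model R4 on the function sum: for all integers n, c, v, c', the reduction Relation.ReflTransGen step3 (sum n c) (ret v c') holds in R3 if and only if the reduction Relation.ReflTransGen step4 (env c (stack (sumS n) bot)) (env c' (stack (retS v) bot)) holds in R4. In words: a call of sum(n) with global counter c returns value v with final counter c' in the existing transformation exactly when it does so in the new stack-based transformation. -/

import Mathlib

namespace R3

inductive Term3 : Type
  | sum : ℤ → ℤ → Term3
  | u1 : ℤ → ℤ → ℤ → Term3
  | u2 : ℤ → ℤ → ℤ → Term3
  | u3 : ℤ → ℤ → ℤ → Term3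
  | u4 : ℤ → ℤ → ℤ → Term3
  | u5 : ℤ → ℤ → ℤ → Term3
  | u7 : ℤ → ℤ → ℤ → Term3
  | u8 : ℤ → ℤ → ℤ → Term3
  | u9 : ℤ → ℤ → ℤ → Term3
  | u6 : ℤ → ℤ → ℤ → Term3 → Term3
  | ret : ℤ → ℤ → Term3
  | main : ℤ → Term3
  | u10 : ℤ → ℤ → Term3
  | u11 : ℤ → ℤ → Term3 → Term3
  | u12 : ℤ → ℤ → Term3

open Term3

inductive step3 : Term3 → Term3 → Prop
  | sum_init (x num : ℤ) : step3 (sum x num) (u1 x num 0)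
  | u1_step (x num z : ℤ) : step3 (u1 x num z) (u2 x (num+1) z)
  | u2_then (x num z : ℤ) : x ≤ 0 → step3 (u2 x num z) (u3 x num z)
  | u2_else (x num z : ℤ) : ¬ x ≤ 0 → step3 (u2 x num z) (u5 x num z)
  | u3_step (x num z : ℤ) : step3 (u3 x num z) (u4 x num 0)
  | u4_step (x num z : ℤ) : step3 (u4 x num z) (u9 x num z)
  | u5_step (x num z : ℤ) : step3 (u5 x num z) (u6 x num z (sum (x-1) num))
  | u6_ret (x numOld z y numNew : ℤ) : step3 (u6 x numOld z (ret y numNew)) (u7 x numNew y)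
  | u7_step (x num z : ℤ) : step3 (u7 x num z) (u8 x num (x+z))
  | u8_step (x num z : ℤ) : step3 (u8 x num z) (u9 x num z)
  | u9_step (x num z : ℤ) : step3 (u9 x num z) (ret z num)
  | main_step (num : ℤ) : step3 (main num) (u10 num 3)
  | u10_step (num z : ℤ) : step3 (u10 num z) (u11 num z (sum z num))
  | u11_ret (numOld z y numNew : ℤ) : step3 (u11 numOld z (ret y numNew)) (u12 y numNew)
  | u12_step (z num : ℤ) : step3 (u12 z num) (ret 0 num)
  | u6_cong (x num z : ℤ) {t t' : Term3} : step3 t t' → step3 (u6 x num z t) (u6 x num z t')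
  | u11_cong (num z : ℤ) {t t' : Term3} : step3 t t' → step3 (u11 num z t) (u11 num z t')
end R3

namespace R4

inductive State : Type
  | mainS : State
  | sumS : ℤ → State
  | u1 : ℤ → ℤ → State
  | u2 : ℤ → ℤ → State
  | u3 : ℤ → ℤ → State
  | u4 : ℤ → ℤ → State
  | u5 : ℤ → ℤ → State
  | u6 : ℤ → ℤ → State
  | u7 : ℤ → ℤ → State
  | u8 : ℤ → ℤ → State
  | u9 : ℤ → ℤ → State
  | retS : ℤ → State
  | u10 : ℤ → State
  | u11 : ℤ → State
  | u12 : ℤ → State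

inductive Proc : Type
  | bot : Proc
  | stack : State → Proc → Proc

inductive Env : Type
  | env : ℤ → Proc → Env

open State Proc Env

inductive L : State → State → Prop
  | sum_init (x : ℤ) : L (sumS x) (u1 x 0)
  | u2_then (x z : ℤ) : x ≤ 0 → L (u2 x z) (u3 x z)
  | u2_else (x z : ℤ) : ¬ x ≤ 0 → L (u2 x z) (u5 x z)
  | u3_step (x z : ℤ) : L (u3 x z) (u4 x 0)
  | u4_step (x z : ℤ) : L (u4 x z) (u9 x z)
  | u7_step (x z : ℤ) : L (u7 x z) (u8 x (x+z))
  | u8_step (x z : ℤ) : L (u8 x z) (u9 x z)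
  | u9_step (x z : ℤ) : L (u9 x z) (retS z)
  | main_step : L mainS (u10 3)
  | u12_step (z : ℤ) : L (u12 z) (retS 0)

inductive step4 : Env → Env → Prop
  | lift (num : ℤ) {s s' : State} (p : Proc) :
      L s s' → step4 (env num (stack s p)) (env num (stack s' p))
  | incr (num x z : ℤ) (p : Proc) :
      step4 (env num (stack (u1 x z) p)) (env (num+1) (stack (u2 x z) p))
  | push (num x z : ℤ) (p : Proc) :
      step4 (env num (stack (u5 x z) p)) (env num (stack (sumS (x-1)) (stack (u6 x z) p)))
  | pop (num y x z : ℤ) (p : Proc) :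
      step4 (env num (stack (retS y) (stack (u6 x z) p))) (env num (stack (u7 x y) p))
  | push_main (num z : ℤ) (p : Proc) :
      step4 (env num (stack (u10 z) p)) (env num (stack (sumS z) (stack (u11 z) p)))
  | pop_main (num y z : ℤ) (p : Proc) :
      step4 (env num (stack (retS y) (stack (u11 z) p))) (env num (stack (u12 y) p))
end R4

section Aux

open R3 R3.Term3 R4 R4.State R4.Proc R4.Env Relation

/-- value of sum -/
def fval (n : ℤ) : ℤ := if n ≤ 0 then 0 else n + fval (n - 1)
termination_by n.toNat
decreasing_by simp_wf; omega

/-- number of calls -/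
def gval (n : ℤ) : ℤ := if n ≤ 0 then 1 else 1 + gval (n - 1)
termination_by n.toNat
decreasing_by simp_wf; omega

theorem ret_irred3 (y m : ℤ) (t : Term3) : ¬ step3 (ret y m) t := fun h => nomatch h

theorem det3 {a b : Term3} (h1 : step3 a b) : ∀ b', step3 a b' → b = b' := by
  induction h1 with
  | u6_cong x num z h ih =>
    intro b' h2
    cases h2 with
    | u6_ret => exact absurd h (ret_irred3 _ _ _)
    | u6_cong _ _ _ h' => rw [ih _ h']
  | u11_cong num z h ih =>
    intro b' h2
    cases h2 with
    | u11_ret => exact absurd h (ret_irred3 _ _ _)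
    | u11_cong _ _ h' => rw [ih _ h']
  | u6_ret =>
    intro b' h2
    cases h2 with
    | u6_ret => rfl
    | u6_cong _ _ _ h' => exact absurd h' (ret_irred3 _ _ _)
  | u11_ret =>
    intro b' h2
    cases h2 with
    | u11_ret => rfl
    | u11_cong _ _ h' => exact absurd h' (ret_irred3 _ _ _)
  | _ => intro b' h2; cases h2 <;> first | rfl | omega

theorem detL {a b b' : State} (h1 : L a b) (h2 : L a b') : b = b' := by
  cases h1 <;> cases h2 <;> first | rfl | omega

theorem det4 {a b b' : Env} (h1 : step4 a b) (h2 : step4 a b') : b = b' := by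
  cases h1 <;> cases h2 <;> try rfl
  all_goals try (rename_i hx hy hz; rw [detL hx hz])
  all_goals exact absurd ‹L _ _› (fun h => by cases h)

theorem unique_nf {α : Type*} {r : α → α → Prop}
    (det : ∀ a b b', r a b → r a b' → b = b')
    {a t t' : α} (h1 : Relation.ReflTransGen r a t) (ht : ∀ u, ¬ r t u)
    (h2 : Relation.ReflTransGen r a t') (ht' : ∀ u, ¬ r t' u) : t = t' := by
  revert h2
  induction h1 using Relation.ReflTransGen.head_induction_on with
  | refl =>
    intro h2
    rcases h2.cases_head with rfl | ⟨b, hb, _⟩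
    · rfl
    · exact absurd hb (ht _)
  | head hab hbt ih =>
    intro h2
    rcases h2.cases_head with rfl | ⟨b', hb', h2'⟩
    · exact absurd hab (ht' _)
    · exact ih (det _ _ _ hab hb' ▸ h2')

theorem cong6 (x m z : ℤ) {t t' : Term3} (h : Relation.ReflTransGen step3 t t') :
    Relation.ReflTransGen step3 (u6 x m z t) (u6 x m z t') :=
  Relation.ReflTransGen.lift (u6 x m z) (fun _ _ => step3.u6_cong x m z) _ _ h

theorem E3 (n c : ℤ) :
    Relation.ReflTransGen step3 (sum n c) (ret (fval n) (c + gval n)) := by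
  by_cases h : n ≤ 0
  · have hf : fval n = 0 := by rw [fval, if_pos h]
    have hg : gval n = 1 := by rw [gval, if_pos h]
    rw [hf, hg]
    exact .head (.sum_init ..) (.head (.u1_step ..) (.head (.u2_then _ _ _ h)
      (.head (.u3_step ..) (.head (.u4_step ..) (.single (.u9_step ..))))))
  · have hf : fval n = n + fval (n - 1) := by rw [fval, if_neg h]
    have hg : gval n = 1 + gval (n - 1) := by rw [gval, if_neg h]
    have ih := E3 (n - 1) (c + 1)
    have chain1 : Relation.ReflTransGen step3 (sum n c)
        (u6 n (c+1) 0 (sum (n-1) (c+1))) :=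
      .head (.sum_init ..) (.head (.u1_step ..) (.head (.u2_else _ _ _ h)
        (.single (.u5_step ..))))
    have chain2 := cong6 n (c+1) 0 ih
    have chain3 : Relation.ReflTransGen step3
        (u6 n (c+1) 0 (ret (fval (n-1)) (c + 1 + gval (n-1))))
        (ret (fval n) (c + gval n)) := by
      rw [hf, hg]
      have : c + (1 + gval (n-1)) = c + 1 + gval (n-1) := by ring
      rw [this]
      exact .head (.u6_ret ..) (.head (.u7_step ..) (.head (.u8_step ..)
        (.single (.u9_step ..))))
    exact (chain1.trans chain2).trans chain3
termination_by n.toNat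
decreasing_by simp_wf; omega

theorem E4 (n c : ℤ) (p : Proc) :
    Relation.ReflTransGen step4 (env c (stack (sumS n) p))
      (env (c + gval n) (stack (retS (fval n)) p)) := by
  by_cases h : n ≤ 0
  · have hf : fval n = 0 := by rw [fval, if_pos h]
    have hg : gval n = 1 := by rw [gval, if_pos h]
    rw [hf, hg]
    exact .head (.lift _ _ (.sum_init _)) (.head (.incr ..)
      (.head (.lift _ _ (.u2_then _ _ h)) (.head (.lift _ _ (.u3_step ..))
      (.head (.lift _ _ (.u4_step ..)) (.single (.lift _ _ (.u9_step ..)))))))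
  · have hf : fval n = n + fval (n - 1) := by rw [fval, if_neg h]
    have hg : gval n = 1 + gval (n - 1) := by rw [gval, if_neg h]
    have ih := E4 (n - 1) (c + 1) (stack (u6 n 0) p)
    have chain1 : Relation.ReflTransGen step4 (env c (stack (sumS n) p))
        (env (c+1) (stack (sumS (n-1)) (stack (u6 n 0) p))) :=
      .head (.lift _ _ (.sum_init _)) (.head (.incr ..)
        (.head (.lift _ _ (.u2_else _ _ h)) (.single (.push ..))))
    have chain3 : Relation.ReflTransGen step4
        (env (c + 1 + gval (n-1)) (stack (retS (fval (n-1))) (stack (u6 n 0) p)))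
        (env (c + gval n) (stack (retS (fval n)) p)) := by
      rw [hf, hg]
      have : c + (1 + gval (n-1)) = c + 1 + gval (n-1) := by ring
      rw [this]
      exact .head (.pop ..) (.head (.lift _ _ (.u7_step ..))
        (.head (.lift _ _ (.u8_step ..)) (.single (.lift _ _ (.u9_step ..)))))
    exact (chain1.trans ih).trans chain3
termination_by n.toNat
decreasing_by simp_wf; omega

theorem nf3 (y m : ℤ) : ∀ u, ¬ step3 (ret y m) u := fun _ h => nomatch h

theorem nf4 (y m : ℤ) : ∀ u, ¬ step4 (env m (stack (retS y) bot)) u := by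
  intro u h
  cases h with
  | lift _ _ hL => cases hL

end Aux

theorem stmt_16 (n c v c' : ℤ) :
    Relation.ReflTransGen R3.step3 (R3.Term3.sum n c) (R3.Term3.ret v c') ↔
    Relation.ReflTransGen R4.step4
      (R4.Env.env c (R4.Proc.stack (R4.State.sumS n) R4.Proc.bot))
      (R4.Env.env c' (R4.Proc.stack (R4.State.retS v) R4.Proc.bot)) := by
  constructor
  · intro h
    have heq := unique_nf (r := R3.step3) (fun _ _ _ h1 h2 => det3 h1 _ h2) h (nf3 v c') (E3 n c)
      (nf3 _ _)
    injection heq with h1 h2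
    subst h1; subst h2
    exact E4 n c R4.Proc.bot
  · intro h
    have heq := unique_nf (r := R4.step4) (fun _ _ _ h1 h2 => det4 h1 h2) h (nf4 v c') (E4 n c R4.Proc.bot)
      (nf4 _ _)
    injection heq with h1 h2
    injection h2 with h3 _
    injection h3 with h4
    subst h1; subst h4
    exact E3 n c
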